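/- Let p be an odd prime and let G be a generalised multi-edge spinal group in standard form. Let g ∈ G and write g = ψ₁⁻¹(g₁,…,g_p) · a^{ε_a(g)} with g₁,…,g_p ∈ G, and similarly g_i = ψ₁⁻¹(g_{i,1},…,g_{i,p}) · a^{ε_a(g_i)} for each i. Then ∂(g₁) + ⋯ + ∂(g_p) ≤ ∂(g). Moreover, if ∂(g) > 1 then ∂(g_{i,j}) < ∂(g) for all i, j ∈ {1,…,p}. -/

import Mathlib

namespace GMS

abbrev Vtx (p : ℕ) := List (Fin p)

def applyP {p : ℕ} : (Vtx p → Equiv.Perm (Fin p)) → Vtx p → Vtx p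
  | _, [] => []
  | f, x :: ω => f [] x :: applyP (fun τ => f (x :: τ)) ω

def invApplyP {p : ℕ} : (Vtx p → Equiv.Perm (Fin p)) → Vtx p → Vtx p
  | _, [] => []
  | f, y :: ω => (f []).symm y :: invApplyP (fun τ => f ((f []).symm y :: τ)) ω

theorem applyP_invApplyP {p : ℕ} (f : Vtx p → Equiv.Perm (Fin p)) (ω : Vtx p) :
    applyP f (invApplyP f ω) = ω := by
  induction ω generalizing f with
  | nil => rfl
  | cons y ω ih => simp [applyP, invApplyP, ih]

theorem invApplyP_applyP {p : ℕ} (f : Vtx p → Equiv.Perm (Fin p)) (ω : Vtx p) :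
    invApplyP f (applyP f ω) = ω := by
  induction ω generalizing f with
  | nil => rfl
  | cons x ω ih => simp [applyP, invApplyP, ih]

def toPerm {p : ℕ} (f : Vtx p → Equiv.Perm (Fin p)) : Equiv.Perm (Vtx p) :=
  ⟨applyP f, invApplyP f, invApplyP_applyP f, applyP_invApplyP f⟩

def treeAut (p : ℕ) : Subgroup (Equiv.Perm (Vtx p)) where
  carrier := {f | ∀ ω ω' : Vtx p, ω <+: ω' → f ω <+: f ω' ∧ f.symm ω <+: f.symm ω'}
  one_mem' := fun _ _ h => ⟨h, h⟩
  mul_mem' := by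
    intro f g hf hg ω ω' h
    exact ⟨(hf _ _ (hg _ _ h).1).1, (hg _ _ (hf _ _ h).2).2⟩
  inv_mem' := by
    intro f hf ω ω' h
    exact ⟨(hf _ _ h).2, (hf _ _ h).1⟩

theorem applyP_append {p : ℕ} (f : Vtx p → Equiv.Perm (Fin p)) (ω t : Vtx p) :
    applyP f (ω ++ t) = applyP f ω ++ applyP (fun τ => f (ω ++ τ)) t := by
  induction ω generalizing f with
  | nil => rfl
  | cons x ω ih => simp [applyP, ih]

theorem invApplyP_append {p : ℕ} (f : Vtx p → Equiv.Perm (Fin p)) (ω t : Vtx p) :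
    invApplyP f (ω ++ t) =
      invApplyP f ω ++ invApplyP (fun τ => f (invApplyP f ω ++ τ)) t := by
  induction ω generalizing f with
  | nil => rfl
  | cons x ω ih => simp [invApplyP, ih]

theorem toPerm_mem_treeAut {p : ℕ} (f : Vtx p → Equiv.Perm (Fin p)) :
    toPerm f ∈ treeAut p := by
  intro ω ω' h
  obtain ⟨t, rfl⟩ := h
  exact ⟨⟨_, (applyP_append f ω t).symm⟩, ⟨_, (invApplyP_append f ω t).symm⟩⟩

/-- The `p`-cycle `x ↦ x + 1` on `Fin p`. -/
def rootCycle (p : ℕ) [NeZero p] : Equiv.Perm (Fin p) := Equiv.addRight 1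

/-- The rooted automorphism `a`, cyclically permuting the first-level subtrees. -/
def aAut (p : ℕ) [NeZero p] : Equiv.Perm (Vtx p) :=
  toPerm (fun ω => if ω = [] then rootCycle p else 1)

/-- Conversion of a non-zero residue position to an index in `Fin (p-1)`. -/
def offIdx {p : ℕ} (hp1 : 1 < p) (k : Fin p) : Fin (p - 1) :=
  ⟨k.val - 1, by have := k.isLt; omega⟩

/-- The portrait of a directed automorphism with directing path `c, cc, ccc, …` and
defining vector `e`: its section at the first-level vertex `c` is itself, and its
section at a first-level vertex `c + k` (for `k ≠ 0`) is `a^{e_k}`. -/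
def dirPort {p : ℕ} [NeZero p] (hp1 : 1 < p) (c : Fin p) (e : Fin (p - 1) → ZMod p) :
    Vtx p → Equiv.Perm (Fin p)
  | [] => 1
  | [x] => if x = c then 1 else rootCycle p ^ (e (offIdx hp1 (x - c))).val
  | x :: y :: ω => if x = c then dirPort hp1 c e (y :: ω) else 1

/-- The directed automorphism with directing path `c, cc, ccc, …` and defining
vector `e`; it satisfies `ψ₁(b) = (…, a^{e_k} at position c + k, …, b at position c, …)`. -/
def dirAut {p : ℕ} [NeZero p] (hp1 : 1 < p) (c : Fin p) (e : Fin (p - 1) → ZMod p) :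
    Equiv.Perm (Vtx p) :=
  toPerm (dirPort hp1 c e)

/-- Defining data for a generalised multi-edge spinal group in standard form:
for each `j`, an `r j`-tuple of linearly independent defining vectors in `(ℤ/pℤ)^{p-1}`. -/
structure SpinalData (p : ℕ) where
  r : Fin p → ℕ
  r_le : ∀ j, r j ≤ p - 1
  r_ne : ∃ j, r j ≠ 0
  e : (j : Fin p) → Fin (r j) → Fin (p - 1) → ZMod p
  indep : ∀ j, LinearIndependent (ZMod p) (e j)

/-- The directing-path letter of the `j`-th family (`j` is 0-indexed; the paper's
family `j+1` is directed along the constant path with letter `p - j - 1`). -/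
def pathLetter {p : ℕ} [NeZero p] (j : Fin p) : Fin p := -(j + 1)

/-- The directed generator `b^{(j)}_i`. -/
def SpinalData.gen {p : ℕ} [NeZero p] (D : SpinalData p) (hp1 : 1 < p)
    (j : Fin p) (i : Fin (D.r j)) : Equiv.Perm (Vtx p) :=
  dirAut hp1 (pathLetter j) (D.e j i)

/-- The generating set `{a} ∪ {b^{(j)}_i}`. -/
def SpinalData.genSet {p : ℕ} [NeZero p] (D : SpinalData p) (hp1 : 1 < p) :
    Set (Equiv.Perm (Vtx p)) :=
  insert (aAut p) {g | ∃ j i, g = D.gen hp1 j i}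

/-- The generalised multi-edge spinal group in standard form associated to `D`. -/
def SpinalData.grp {p : ℕ} [NeZero p] (D : SpinalData p) (hp1 : 1 < p) :
    Subgroup (Equiv.Perm (Vtx p)) :=
  Subgroup.closure (D.genSet hp1)

theorem aAut_mem_grp {p : ℕ} [NeZero p] (D : SpinalData p) (hp1 : 1 < p) :
    aAut p ∈ D.grp hp1 :=
  Subgroup.subset_closure (Set.mem_insert _ _)

theorem gen_mem_grp {p : ℕ} [NeZero p] (D : SpinalData p) (hp1 : 1 < p)
    (j : Fin p) (i : Fin (D.r j)) : D.gen hp1 j i ∈ D.grp hp1 :=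
  Subgroup.subset_closure (Set.mem_insert_iff.mpr (Or.inr ⟨j, i, rfl⟩))

/-- `ψ₁(g) = (s 0, …, s (p-1))`: the element `g` stabilises the first level and has
section `s x` at the first-level vertex `x`. -/
def hasSections {p : ℕ} (g : Equiv.Perm (Vtx p)) (s : Fin p → Equiv.Perm (Vtx p)) : Prop :=
  ∀ (x : Fin p) (τ : Vtx p), g (x :: τ) = x :: s x τ

/-- `g` fixes the vertex `u` and acts on the subtree rooted at `u` as `s` (under the
natural identification of the subtree with the whole tree). -/
def sectionAt {p : ℕ} (u : Vtx p) (g s : Equiv.Perm (Vtx p)) : Prop :=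
  ∀ τ : Vtx p, g (u ++ τ) = u ++ s τ

/-- The pointwise stabiliser of the `n`-th level of the tree. -/
def levelStab (p : ℕ) (n : ℕ) : Subgroup (Equiv.Perm (Vtx p)) where
  carrier := {g | ∀ ω : Vtx p, ω.length = n → g ω = ω}
  one_mem' := fun _ _ => rfl
  mul_mem' := by
    intro f g hf hg ω hω
    have := hg ω hω
    simp only [Equiv.Perm.mul_apply, this]
    exact hf ω hω
  inv_mem' := by
    intro f hf ω hω
    have := hf ω hω
    calc f⁻¹ ω = f⁻¹ (f ω) := by rw [this]
    _ = ω := f.symm_apply_apply ω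

/-- Spherical transitivity: `G` acts transitively on every level of the tree. -/
def SphericallyTransitive (p : ℕ) (G : Subgroup (Equiv.Perm (Vtx p))) : Prop :=
  ∀ ω ω' : Vtx p, ω.length = ω'.length → ∃ g ∈ G, g ω = ω'

/-- `G` is fractal: it is spherically transitive and for every vertex `u`, the
restriction to the subtree rooted at `u` of the stabiliser of `u` in `G` is `G` itself. -/
def Fractal (p : ℕ) (G : Subgroup (Equiv.Perm (Vtx p))) : Prop :=
  SphericallyTransitive p G ∧
    ∀ (u : Vtx p) (s : Equiv.Perm (Vtx p)), s ∈ G ↔ ∃ g ∈ G, sectionAt u g s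

/-- `G` is regular branch over `K`: `G` is fractal, `K` is a non-trivial subgroup of
`Stab_G(1)` of finite index in `G`, and `K × ⋯ × K ⊆ ψ₁(K)`. -/
def RegularBranch (p : ℕ) (G K : Subgroup (Equiv.Perm (Vtx p))) : Prop :=
  Fractal p G ∧ K ≠ ⊥ ∧ K ≤ G ⊓ levelStab p 1 ∧ K.relIndex G ≠ 0 ∧
    ∀ s : Fin p → Equiv.Perm (Vtx p), (∀ x, s x ∈ K) → ∃ g ∈ K, hasSections g s

/-- The third term `γ₃(H) = [[H,H],H]` of the lower central series. -/
def gamma3 {Γ : Type*} [Group Γ] (H : Subgroup Γ) : Subgroup Γ := ⁅(⁅H, H⁆ : Subgroup Γ), H⁆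

/-- Rigid stabiliser (in the full permutation group) of the vertex `u`: permutations
fixing every vertex not having `u` as a prefix. -/
def rigidStab (p : ℕ) (u : Vtx p) : Subgroup (Equiv.Perm (Vtx p)) where
  carrier := {g | ∀ ω : Vtx p, ¬ u <+: ω → g ω = ω}
  one_mem' := fun _ _ => rfl
  mul_mem' := by
    intro f g hf hg ω hω
    have := hg ω hω
    simp only [Equiv.Perm.mul_apply, this]
    exact hf ω hω
  inv_mem' := by
    intro f hf ω hω
    have := hf ω hω
    calc f⁻¹ ω = f⁻¹ (f ω) := by rw [this]
    _ = ω := f.symm_apply_apply ω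

/-- The rigid `n`-th level stabiliser of `G`: the subgroup generated by (equivalently,
the product of) the rigid vertex stabilisers of the vertices at level `n`. -/
def rigidLevelStab (p : ℕ) (G : Subgroup (Equiv.Perm (Vtx p))) (n : ℕ) :
    Subgroup (Equiv.Perm (Vtx p)) :=
  ⨆ u ∈ {u : Vtx p | u.length = n}, (G ⊓ rigidStab p u)

/-- `G` is a branch group (with respect to its action on the regular rooted tree). -/
def Branch (p : ℕ) (G : Subgroup (Equiv.Perm (Vtx p))) : Prop :=
  SphericallyTransitive p G ∧ ∀ n : ℕ, (rigidLevelStab p G n).relIndex G ≠ 0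

/-- An infinite group all of whose proper quotients are finite. -/
def JustInfinite {Γ : Type*} [Group Γ] (G : Subgroup Γ) : Prop :=
  (G : Set Γ).Infinite ∧
    ∀ N : Subgroup ↥G, N.Normal → N ≠ ⊥ → N.FiniteIndex

/-- The conjugate subgroup `x H x⁻¹`. -/
def conjSub {Γ : Type*} [Group Γ] (x : Γ) (H : Subgroup Γ) : Subgroup Γ :=
  H.map (MulAut.conj x).toMonoidHom

/-- `M` is a dense subgroup of `G` with respect to the profinite topology on `G`:
`NM = G` for every normal subgroup `N` of `G` of finite index. -/
def DenseIn {Γ : Type*} [Group Γ] (M G : Subgroup Γ) : Prop :=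
  M ≤ G ∧ ∀ N : Subgroup Γ, N ≤ G → (N.subgroupOf G).Normal → N.relIndex G ≠ 0 →
    G ≤ N ⊔ M

/-- The restriction to the subtree rooted at `u` of the stabiliser of `u` in `M`
(the "upper companion" subgroup `M_u`), under the identification of the subtree with
the whole tree. -/
def restrAt (p : ℕ) (u : Vtx p) (M : Subgroup (Equiv.Perm (Vtx p))) :
    Subgroup (Equiv.Perm (Vtx p)) where
  carrier := {s | ∃ g ∈ M, sectionAt u g s}
  one_mem' := ⟨1, M.one_mem, fun τ => rfl⟩
  mul_mem' := by
    rintro s s' ⟨g, hg, hgs⟩ ⟨g', hg', hgs'⟩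
    refine ⟨g * g', M.mul_mem hg hg', fun τ => ?_⟩
    simp only [Equiv.Perm.mul_apply, hgs' τ, hgs (s' τ)]
  inv_mem' := by
    rintro s ⟨g, hg, hgs⟩
    refine ⟨g⁻¹, M.inv_mem hg, fun τ => ?_⟩
    have h1 : g (u ++ s⁻¹ τ) = u ++ τ := by
      rw [hgs (s⁻¹ τ)]
      simp
    calc g⁻¹ (u ++ τ) = g⁻¹ (g (u ++ s⁻¹ τ)) := by rw [h1]
    _ = u ++ s⁻¹ τ := g.symm_apply_apply _

/-- Index `p - i` (`0`-indexed version of `i ↦ p - i` on `{1, …, p-1}`). -/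
def revIdx {p : ℕ} (k : Fin (p - 1)) : Fin (p - 1) :=
  ⟨p - 2 - k.val, by have := k.isLt; omega⟩


/-- Non-constancy of a defining vector. -/
def IsNonConstant {p : ℕ} (v : Fin (p - 1) → ZMod p) : Prop :=
  ¬ ∃ α : ZMod p, ∀ k, v k = α

/-- The regularity condition defining the subclass `𝒞_reg`: every non-empty family
of defining vectors contains a non-constant vector. -/
def SpinalData.IsReg {p : ℕ} (D : SpinalData p) : Prop :=
  ∀ j, D.r j ≠ 0 → ∃ i, IsNonConstant (D.e j i)

/-- Non-symmetry of a defining vector: `e_i ≠ e_{p-i}` for some `i`. -/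
def IsNonSymmetric {p : ℕ} (v : Fin (p - 1) → ZMod p) : Prop :=
  ∃ k, v k ≠ v (revIdx k)

/-- Membership in the class `𝒞`: subgroups of `Aut(T)` conjugate to a generalised
multi-edge spinal group in standard form. -/
def inC (p : ℕ) [NeZero p] (hp1 : 1 < p) (G : Subgroup (Equiv.Perm (Vtx p))) : Prop :=
  ∃ (D : SpinalData p) (x : Equiv.Perm (Vtx p)), x ∈ treeAut p ∧
    G = (D.grp hp1).map (MulAut.conj x).toMonoidHom

/-- Membership in the subclass `𝒞_reg`. -/
def inCreg (p : ℕ) [NeZero p] (hp1 : 1 < p) (G : Subgroup (Equiv.Perm (Vtx p))) : Prop :=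
  ∃ (D : SpinalData p) (x : Equiv.Perm (Vtx p)), x ∈ treeAut p ∧ D.IsReg ∧
    G = (D.grp hp1).map (MulAut.conj x).toMonoidHom

/-- The subgroup `⟨b^{(j)}_1, …, b^{(j)}_{r_j}⟩` generated by the `j`-th family of
directed generators. -/
def SpinalData.bFam {p : ℕ} [NeZero p] (D : SpinalData p) (hp1 : 1 < p) (j : Fin p) :
    Subgroup (Equiv.Perm (Vtx p)) :=
  Subgroup.closure (Set.range (D.gen hp1 j))

/-- `g` can be written as an alternating product
`c₀ d₀ c₁ d₁ ⋯ c_{N-1} d_{N-1} c_N` with each `cₖ` a power of `a` and each `dₖ` an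
element of one of the groups `⟨𝐛^{(j)}⟩`; the number of directed syllables is `N`. -/
def lenWitness {p : ℕ} [NeZero p] (D : SpinalData p) (hp1 : 1 < p)
    (g : Equiv.Perm (Vtx p)) (N : ℕ) : Prop :=
  ∃ (c : Fin (N + 1) → Equiv.Perm (Vtx p)) (d : Fin N → Equiv.Perm (Vtx p)),
    (∀ k, c k ∈ Subgroup.zpowers (aAut p)) ∧
    (∀ k, ∃ j, d k ∈ D.bFam hp1 j) ∧
    g = (List.ofFn fun k : Fin N => c k.castSucc * d k).prod * c (Fin.last N)

/-- The length `∂(g)`: the minimal number of directed syllables needed to express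
`g`; this coincides with the minimum over all preimages of `g` in the free product
`⟨â⟩ * ⟨𝐛̂^{(1)}⟩ * ⋯ * ⟨𝐛̂^{(p)}⟩` of the number of syllables of the normal form
lying in the directed factors. -/
noncomputable def dlen {p : ℕ} [NeZero p] (D : SpinalData p) (hp1 : 1 < p)
    (g : Equiv.Perm (Vtx p)) : ℕ :=
  sInf {N | lenWitness D hp1 g N}


section Helpers
set_option linter.unusedSectionVars false
set_option linter.unusedTactic false

variable {p : ℕ} [NeZero p]
open Fin.NatCast Fin.CommRing

theorem applyP_one (ω : Vtx p) : applyP (fun _ => (1 : Equiv.Perm (Fin p))) ω = ω := by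
  induction ω with
  | nil => rfl
  | cons x ω ih => simpa [applyP] using ih

theorem toPerm_apply (f : Vtx p → Equiv.Perm (Fin p)) (ω : Vtx p) :
    toPerm f ω = applyP f ω := rfl

theorem aAut_nil : aAut p [] = ([] : Vtx p) := rfl

theorem rootCycle_apply (x : Fin p) : rootCycle p x = x + 1 := rfl

theorem aAut_cons (x : Fin p) (τ : Vtx p) : aAut p (x :: τ) = (x + 1) :: τ := by
  rw [aAut, toPerm_apply]
  simp [applyP, applyP_one, rootCycle_apply]

theorem aAut_pow_nil (n : ℕ) : (aAut p ^ n) [] = ([] : Vtx p) := by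
  induction n with
  | zero => rfl
  | succ n ih => rw [pow_succ]; simpa [aAut_nil] using ih

theorem aAut_pow_cons (n : ℕ) (x : Fin p) (τ : Vtx p) :
    (aAut p ^ n) (x :: τ) = (x + (n : Fin p)) :: τ := by
  induction n generalizing x with
  | zero => simp
  | succ n ih =>
      rw [pow_succ, Equiv.Perm.mul_apply, aAut_cons, ih]
      congr 1
      push_cast
      ring


theorem aAut_pow_eq_one {n : ℕ} (h : (n : Fin p) = 0) : aAut p ^ n = 1 := by
  apply Equiv.ext
  intro ω
  cases ω with
  | nil => simp [aAut_pow_nil]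
  | cons x τ => simp [aAut_pow_cons, h]

theorem aAut_pow_p : aAut p ^ p = 1 :=
  aAut_pow_eq_one (Fin.natCast_self p)

theorem mem_zpowers_aAut {c : Equiv.Perm (Vtx p)} (h : c ∈ Subgroup.zpowers (aAut p)) :
    ∃ n : ℕ, c = aAut p ^ n := by
  obtain ⟨z, rfl⟩ := h
  have hp0 : (p : ℤ) ≠ 0 := by exact_mod_cast (NeZero.ne p)
  refine ⟨(z % p).toNat, ?_⟩
  have h1 : z = p * (z / p) + z % p := (Int.mul_ediv_add_emod z p).symm
  have h2 : ((z % p).toNat : ℤ) = z % p := Int.toNat_of_nonneg (Int.emod_nonneg z hp0)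
  calc aAut p ^ z = aAut p ^ ((p : ℤ) * (z / p) + z % p) := by rw [← h1]
  _ = ((aAut p ^ (p : ℤ)) ^ (z / p)) * aAut p ^ (z % p) := by rw [zpow_add, zpow_mul]
  _ = aAut p ^ (z % p) := by
      rw [← h2, zpow_natCast, zpow_natCast, aAut_pow_p]
      simp
  _ = aAut p ^ ((z % p).toNat) := by rw [← h2]; exact zpow_natCast _ _

theorem hasSections_one : hasSections (1 : Equiv.Perm (Vtx p)) (fun _ => 1) :=
  fun _ _ => rfl

theorem hasSections_mul {f g : Equiv.Perm (Vtx p)} {s t : Fin p → Equiv.Perm (Vtx p)}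
    (hf : hasSections f s) (hg : hasSections g t) :
    hasSections (f * g) (fun x => s x * t x) := by
  intro x τ
  simp only [Equiv.Perm.mul_apply, hg x τ, hf x (t x τ)]

theorem hasSections_inv {f : Equiv.Perm (Vtx p)} {s : Fin p → Equiv.Perm (Vtx p)}
    (hf : hasSections f s) : hasSections f⁻¹ (fun x => (s x)⁻¹) := by
  intro x τ
  have : f (x :: (s x)⁻¹ τ) = x :: τ := by rw [hf x ((s x)⁻¹ τ)]; simp
  calc f⁻¹ (x :: τ) = f⁻¹ (f (x :: (s x)⁻¹ τ)) := by rw [this]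
  _ = x :: (s x)⁻¹ τ := f.symm_apply_apply _

theorem hasSections_unique {f : Equiv.Perm (Vtx p)} {s t : Fin p → Equiv.Perm (Vtx p)}
    (hf : hasSections f s) (hf' : hasSections f t) : ∀ x, s x = t x := by
  intro x
  apply Equiv.ext
  intro τ
  have := (hf x τ).symm.trans (hf' x τ)
  exact (List.cons.injEq _ _ _ _ ▸ this).2

theorem aAut_pow_inv_cons (n : ℕ) (x : Fin p) (τ : Vtx p) :
    (aAut p ^ n)⁻¹ (x :: τ) = (x - (n : Fin p)) :: τ := by
  have : (aAut p ^ n) ((x - (n : Fin p)) :: τ) = x :: τ := by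
    rw [aAut_pow_cons]; congr 1; ring
  calc (aAut p ^ n)⁻¹ (x :: τ) = (aAut p ^ n)⁻¹ ((aAut p ^ n) ((x - (n : Fin p)) :: τ)) := by
        rw [this]
  _ = _ := (aAut p ^ n).symm_apply_apply _

theorem aAut_pow_inv_nil (n : ℕ) : (aAut p ^ n)⁻¹ [] = ([] : Vtx p) := by
  calc (aAut p ^ n)⁻¹ [] = (aAut p ^ n)⁻¹ ((aAut p ^ n) []) := by rw [aAut_pow_nil]
  _ = [] := (aAut p ^ n).symm_apply_apply _

theorem hasSections_conj {f : Equiv.Perm (Vtx p)} {s : Fin p → Equiv.Perm (Vtx p)}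
    (hf : hasSections f s) (n : ℕ) :
    hasSections (aAut p ^ n * f * (aAut p ^ n)⁻¹) (fun x => s (x - (n : Fin p))) := by
  intro x τ
  simp only [Equiv.Perm.mul_apply, aAut_pow_inv_cons, hf (x - (n : Fin p)) τ, aAut_pow_cons]
  congr 1
  ring

/-- A product of two powers of `a` which stabilises the first level is trivial. -/
theorem sections_of_apow {M k : ℕ} {s : Fin p → Equiv.Perm (Vtx p)}
    (h : hasSections (aAut p ^ M * (aAut p ^ k)⁻¹) s) :
    aAut p ^ M * (aAut p ^ k)⁻¹ = 1 ∧ ∀ x, s x = 1 := by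
  have key : ∀ (x : Fin p) (τ : Vtx p), (x - (k : Fin p) + M) :: τ = x :: s x τ := by
    intro x τ
    rw [← h x τ]
    simp only [Equiv.Perm.mul_apply, aAut_pow_inv_cons, aAut_pow_cons]
  have h0 : (M : Fin p) - k = 0 := by
    have := key 0 []
    have h1 : (0 : Fin p) - k + M = 0 := (List.cons.injEq _ _ _ _ ▸ this).1
    calc (M : Fin p) - k = 0 - (k : Fin p) + M := by ring
    _ = 0 := h1
  constructor
  · apply Equiv.ext
    intro ω
    cases ω with
    | nil => simp only [Equiv.Perm.mul_apply, aAut_pow_inv_nil, aAut_pow_nil, Equiv.Perm.one_apply]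
    | cons x τ =>
        simp only [Equiv.Perm.mul_apply, aAut_pow_inv_cons, aAut_pow_cons, Equiv.Perm.one_apply]
        congr 1
        calc x - (k : Fin p) + M = x + ((M : Fin p) - k) := by ring
        _ = x := by rw [h0, add_zero]
  · intro x
    apply Equiv.ext
    intro τ
    have := key x τ
    exact ((List.cons.injEq _ _ _ _ ▸ this).2).symm


theorem rootCycle_pow (m : ℕ) (y : Fin p) : (rootCycle p ^ m) y = y + (m : Fin p) := by
  induction m generalizing y with
  | zero => simp
  | succ m ih =>
      rw [pow_succ, Equiv.Perm.mul_apply, rootCycle_apply, ih]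
      push_cast
      ring

theorem dirPort_nil (hp1 : 1 < p) (c : Fin p) (e : Fin (p - 1) → ZMod p) :
    dirPort hp1 c e [] = 1 := rfl

theorem dirPort_spine (hp1 : 1 < p) (c : Fin p) (e : Fin (p - 1) → ZMod p) :
    (fun τ' => dirPort hp1 c e (c :: τ')) = dirPort hp1 c e := by
  funext τ'
  cases τ' with
  | nil => simp [dirPort]
  | cons y ω => simp [dirPort]

theorem applyP_apow_portrait (m : ℕ) (τ : Vtx p) :
    applyP (fun ω => if ω = [] then rootCycle p ^ m else 1) τ = (aAut p ^ m) τ := by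
  cases τ with
  | nil => rw [aAut_pow_nil]; rfl
  | cons y ω =>
      show (if ([] : Vtx p) = [] then rootCycle p ^ m else 1) y :: applyP _ ω = _
      rw [aAut_pow_cons, if_pos rfl, rootCycle_pow]
      congr 1
      have : (fun τ' => if (y :: τ' : Vtx p) = [] then rootCycle p ^ m else 1)
          = fun _ => (1 : Equiv.Perm (Fin p)) := by
        funext τ'; simp
      rw [this, applyP_one]

theorem hasSections_dirAut (hp1 : 1 < p) (c : Fin p) (e : Fin (p - 1) → ZMod p) :
    hasSections (dirAut hp1 c e)
      (fun x => if x = c then dirAut hp1 c e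
        else aAut p ^ (e (offIdx hp1 (x - c))).val) := by
  intro x τ
  rw [dirAut, toPerm_apply]
  show dirPort hp1 c e [] x :: applyP (fun τ' => dirPort hp1 c e (x :: τ')) τ = _
  rw [dirPort_nil]
  simp only [Equiv.Perm.one_apply]
  by_cases hx : x = c
  · subst hx
    rw [dirPort_spine, if_pos rfl]
    rfl
  · rw [if_neg hx]
    have : (fun τ' => dirPort hp1 c e (x :: τ'))
        = fun ω => if ω = [] then rootCycle p ^ (e (offIdx hp1 (x - c))).val else 1 := by
      funext τ'
      cases τ' with
      | nil => simp [dirPort, hx]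
      | cons y ω => simp [dirPort, hx]
    rw [this, applyP_apow_portrait]

theorem hasSections_gen (D : SpinalData p) (hp1 : 1 < p) (j : Fin p) (i : Fin (D.r j)) :
    hasSections (D.gen hp1 j i)
      (fun x => if x = pathLetter j then D.gen hp1 j i
        else aAut p ^ ((D.e j i) (offIdx hp1 (x - pathLetter j))).val) :=
  hasSections_dirAut hp1 (pathLetter j) (D.e j i)

theorem bFam_le_grp (D : SpinalData p) (hp1 : 1 < p) (j : Fin p) :
    D.bFam hp1 j ≤ D.grp hp1 := by
  apply Subgroup.closure_mono
  rintro g ⟨i, rfl⟩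
  exact Set.mem_insert_iff.mpr (Or.inr ⟨j, i, rfl⟩)

theorem gen_mem_bFam (D : SpinalData p) (hp1 : 1 < p) (j : Fin p) (i : Fin (D.r j)) :
    D.gen hp1 j i ∈ D.bFam hp1 j :=
  Subgroup.subset_closure (Set.mem_range_self i)

theorem bFam_sections (D : SpinalData p) (hp1 : 1 < p) (j : Fin p) :
    ∀ d ∈ D.bFam hp1 j, ∃ s, hasSections d s ∧ s (pathLetter j) ∈ D.bFam hp1 j ∧
      ∀ y, y ≠ pathLetter j → s y ∈ Subgroup.zpowers (aAut p) := by
  intro d hd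
  induction hd using Subgroup.closure_induction with
  | mem g hg =>
      obtain ⟨i, rfl⟩ := hg
      refine ⟨_, hasSections_gen D hp1 j i, ?_, ?_⟩
      · rw [if_pos rfl]; exact gen_mem_bFam D hp1 j i
      · intro y hy
        rw [if_neg hy]
        exact pow_mem (Subgroup.mem_zpowers _) _
  | one => exact ⟨fun _ => 1, hasSections_one, Subgroup.one_mem _, fun _ _ => Subgroup.one_mem _⟩
  | mul g g' _ _ ihg ihg' =>
      obtain ⟨s, hs, hsb, hsa⟩ := ihg
      obtain ⟨t, ht, htb, hta⟩ := ihg'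
      exact ⟨fun x => s x * t x, hasSections_mul hs ht, Subgroup.mul_mem _ hsb htb,
        fun y hy => Subgroup.mul_mem _ (hsa y hy) (hta y hy)⟩
  | inv g _ ihg =>
      obtain ⟨s, hs, hsb, hsa⟩ := ihg
      exact ⟨fun x => (s x)⁻¹, hasSections_inv hs, Subgroup.inv_mem _ hsb,
        fun y hy => Subgroup.inv_mem _ (hsa y hy)⟩


/-- Words with at most `N` directed syllables: `lenW N` consists of products
`c₁ d₁ c₂ d₂ ⋯ c_N d_N c_{N+1}` (here given recursively). -/
def lenW (D : SpinalData p) (hp1 : 1 < p) : ℕ → Set (Equiv.Perm (Vtx p))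
  | 0 => ↑(Subgroup.zpowers (aAut p))
  | (N + 1) => {g | ∃ c d h, c ∈ Subgroup.zpowers (aAut p) ∧ (∃ j, d ∈ D.bFam hp1 j) ∧
      h ∈ lenW D hp1 N ∧ g = c * d * h}

variable {D : SpinalData p} {hp1 : 1 < p}

theorem one_mem_lenW : (1 : Equiv.Perm (Vtx p)) ∈ lenW D hp1 0 := Subgroup.one_mem _

theorem apow_mul_lenW {c g : Equiv.Perm (Vtx p)} {N : ℕ}
    (hc : c ∈ Subgroup.zpowers (aAut p)) (hg : g ∈ lenW D hp1 N) :
    c * g ∈ lenW D hp1 N := by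
  cases N with
  | zero => exact Subgroup.mul_mem _ hc hg
  | succ N =>
      obtain ⟨c', d, h, hc', hd, hh, rfl⟩ := hg
      exact ⟨c * c', d, h, Subgroup.mul_mem _ hc hc', hd, hh, by group⟩

theorem bfam_mul_lenW {d g : Equiv.Perm (Vtx p)} {N : ℕ} {j : Fin p}
    (hd : d ∈ D.bFam hp1 j) (hg : g ∈ lenW D hp1 N) :
    d * g ∈ lenW D hp1 (N + 1) :=
  ⟨1, d, g, Subgroup.one_mem _, ⟨j, hd⟩, hg, by group⟩

theorem lenW_mul {g h : Equiv.Perm (Vtx p)} {N M : ℕ}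
    (hg : g ∈ lenW D hp1 N) (hh : h ∈ lenW D hp1 M) : g * h ∈ lenW D hp1 (N + M) := by
  induction N generalizing g with
  | zero => rw [Nat.zero_add]; exact apow_mul_lenW hg hh
  | succ N ih =>
      obtain ⟨c, d, g', hc, hd, hg', rfl⟩ := hg
      have : g' * h ∈ lenW D hp1 (N + M) := ih hg'
      have h2 : d * (g' * h) ∈ lenW D hp1 (N + M + 1) := bfam_mul_lenW hd.choose_spec this
      have h3 : c * (d * (g' * h)) ∈ lenW D hp1 (N + M + 1) := apow_mul_lenW hc h2
      have : N + M + 1 = N + 1 + M := by omega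
      rw [← this]
      convert h3 using 1
      group

theorem lenW_inv {g : Equiv.Perm (Vtx p)} {N : ℕ} (hg : g ∈ lenW D hp1 N) :
    g⁻¹ ∈ lenW D hp1 N := by
  induction N generalizing g with
  | zero => exact Subgroup.inv_mem _ hg
  | succ N ih =>
      obtain ⟨c, d, h, hc, ⟨j, hd⟩, hh, rfl⟩ := hg
      have h1 : d⁻¹ * c⁻¹ ∈ lenW D hp1 1 :=
        bfam_mul_lenW (Subgroup.inv_mem _ hd) (Subgroup.inv_mem _ hc)
      have h2 : h⁻¹ * (d⁻¹ * c⁻¹) ∈ lenW D hp1 (N + 1) := lenW_mul (ih hh) h1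
      convert h2 using 1
      group

theorem lenW_subset_grp {g : Equiv.Perm (Vtx p)} {N : ℕ} (hg : g ∈ lenW D hp1 N) :
    g ∈ D.grp hp1 := by
  induction N generalizing g with
  | zero =>
      obtain ⟨z, rfl⟩ := hg
      exact zpow_mem (aAut_mem_grp D hp1) z
  | succ N ih =>
      obtain ⟨c, d, h, hc, ⟨j, hd⟩, hh, rfl⟩ := hg
      obtain ⟨z, rfl⟩ := hc
      exact Subgroup.mul_mem _ (Subgroup.mul_mem _ (zpow_mem (aAut_mem_grp D hp1) z)
        (bFam_le_grp D hp1 j hd)) (ih hh)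

theorem mixedList_mem_lenW (L : List (Fin p × Bool × Equiv.Perm (Vtx p)))
    (hL : ∀ e ∈ L, if e.2.1 = true then e.2.2 ∈ D.bFam hp1 e.1
      else e.2.2 ∈ Subgroup.zpowers (aAut p)) :
    (L.map (fun e => e.2.2)).prod ∈ lenW D hp1 (L.countP (fun e => e.2.1)) := by
  induction L with
  | nil => exact one_mem_lenW
  | cons e L ih =>
      have he := hL e (List.mem_cons_self)
      have ihL := ih (fun e' he' => hL e' (List.mem_cons_of_mem e he'))
      rw [List.map_cons, List.prod_cons, List.countP_cons]
      by_cases hb : e.2.1 = true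
      · rw [hb] at he ⊢
        simp only [if_pos rfl, if_true]
        exact bfam_mul_lenW he ihL
      · rw [if_neg hb] at he
        simp only [hb]
        simpa using apow_mul_lenW he ihL

theorem pureList_mem_lenW (L : List (Fin p × Equiv.Perm (Vtx p)))
    (hL : ∀ e ∈ L, e.2 ∈ D.bFam hp1 e.1) :
    (L.map Prod.snd).prod ∈ lenW D hp1 L.length := by
  induction L with
  | nil => exact one_mem_lenW
  | cons e L ih =>
      rw [List.map_cons, List.prod_cons]
      exact bfam_mul_lenW (hL e (List.mem_cons_self))
        (ih (fun e' he' => hL e' (List.mem_cons_of_mem e he')))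

theorem pureList_merge (L : List (Fin p × Equiv.Perm (Vtx p)))
    (hL : ∀ e ∈ L, e.2 ∈ D.bFam hp1 e.1)
    (hch : ¬ (L.map Prod.fst).IsChain (· ≠ ·)) :
    (L.map Prod.snd).prod ∈ lenW D hp1 (L.length - 1) := by
  induction L with
  | nil => exact absurd List.isChain_nil hch
  | cons e L ih =>
      cases L with
      | nil => exact absurd (List.isChain_singleton _) hch
      | cons e' L' =>
          rw [List.map_cons, List.map_cons, List.isChain_cons_cons] at hch
          push_neg at hch
          by_cases hje : e.1 = e'.1
          · -- merge the two adjacent syllables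
            have h1 : e.2 * e'.2 ∈ D.bFam hp1 e.1 := by
              refine Subgroup.mul_mem _ (hL e (by simp)) ?_
              rw [hje]
              exact hL e' (by simp)
            have h2 := pureList_mem_lenW ((e.1, e.2 * e'.2) :: L')
              (by
                rintro f hf
                rcases List.mem_cons.mp hf with h | h
                · rw [h]; exact h1
                · exact hL f (by simp [h]))
            simp only [List.map_cons, List.prod_cons, List.length_cons] at h2 ⊢
            rw [Nat.add_sub_cancel, mul_assoc] at *
            exact h2
          · have hch' : ¬ ((e' :: L').map Prod.fst).IsChain (· ≠ ·) := by
              intro hc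
              exact hch hje (by simpa using hc)
            have h2 := ih (fun f hf => hL f (List.mem_cons_of_mem e hf)) hch'
            rw [List.map_cons, List.prod_cons]
            have h3 := bfam_mul_lenW (hL e (by simp)) h2
            simpa using h3


theorem lenWitness_of_lenW {g : Equiv.Perm (Vtx p)} {N : ℕ} (hg : g ∈ lenW D hp1 N) :
    lenWitness D hp1 g N := by
  induction N generalizing g with
  | zero =>
      refine ⟨fun _ => g, Fin.elim0, fun _ => hg, fun k => k.elim0, ?_⟩
      simp
  | succ N ih =>
      obtain ⟨c, d, h, hc, hd, hh, rfl⟩ := hg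
      obtain ⟨c', d', hc', hd', rfl⟩ := ih hh
      refine ⟨Fin.cases c c', Fin.cases d d', ?_, ?_, ?_⟩
      · intro k
        induction k using Fin.cases with
        | zero => simpa using hc
        | succ k => simpa using hc' k
      · intro k
        induction k using Fin.cases with
        | zero => simpa using hd
        | succ k => simpa using hd' k
      · rw [List.ofFn_succ, List.prod_cons]
        have hfun : (fun i : Fin N =>
            Fin.cases (motive := fun _ => Equiv.Perm (Vtx p)) c c' i.succ.castSucc *
              Fin.cases (motive := fun _ => Equiv.Perm (Vtx p)) d d' i.succ) =
            fun i : Fin N => c' i.castSucc * d' i := by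
          funext i
          rw [← Fin.succ_castSucc, Fin.cases_succ, Fin.cases_succ]
        have h3 : Fin.cases (motive := fun _ => Equiv.Perm (Vtx p)) c c' (Fin.last (N + 1))
            = c' (Fin.last N) := by
          rw [← Fin.succ_last, Fin.cases_succ]
        beta_reduce
        rw [hfun, h3]
        simp only [Fin.castSucc_zero, Fin.cases_zero]
        group

theorem lenW_of_lenWitness {g : Equiv.Perm (Vtx p)} {N : ℕ} (hg : lenWitness D hp1 g N) :
    g ∈ lenW D hp1 N := by
  induction N generalizing g with
  | zero =>
      obtain ⟨c, d, hc, hd, rfl⟩ := hg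
      simpa [lenW] using hc (Fin.last 0)
  | succ N ih =>
      obtain ⟨c, d, hc, hd, rfl⟩ := hg
      have hh : lenWitness D hp1
          ((List.ofFn fun k : Fin N => c k.castSucc.succ * d k.succ).prod *
            c (Fin.last (N + 1))) N := by
        refine ⟨fun k => c k.succ, fun k => d k.succ, fun k => hc _, fun k => hd _, ?_⟩
        have hfun : (fun k : Fin N => c k.castSucc.succ * d k.succ) =
            fun k : Fin N => c k.succ.castSucc * d k.succ := by
          funext k
          rw [Fin.succ_castSucc]
        rw [hfun, ← Fin.succ_last]
      refine ⟨c 0, d 0, _, hc 0, hd 0, ih hh, ?_⟩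
      rw [List.ofFn_succ, List.prod_cons]
      have hfun : (fun i : Fin N => c i.succ.castSucc * d i.succ) =
          fun i : Fin N => c i.castSucc.succ * d i.succ := by
        funext i
        rw [Fin.succ_castSucc]
      beta_reduce
      rw [hfun]
      have h2 : (Fin.castSucc (0 : Fin (N + 1))) = (0 : Fin (N + 2)) := rfl
      rw [h2]
      group

theorem exists_lenW_of_mem_grp {g : Equiv.Perm (Vtx p)} (hg : g ∈ D.grp hp1) :
    ∃ N, g ∈ lenW D hp1 N := by
  induction hg using Subgroup.closure_induction with
  | mem g hg =>
      rcases Set.mem_insert_iff.mp hg with h | ⟨j, i, h⟩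
      · exact ⟨0, by rw [h]; exact Subgroup.mem_zpowers _⟩
      · refine ⟨1, 1, g, 1, Subgroup.one_mem _, ⟨j, by rw [h]; exact gen_mem_bFam D hp1 j i⟩,
          one_mem_lenW, by group⟩
  | one => exact ⟨0, one_mem_lenW⟩
  | mul g g' _ _ ihg ihg' =>
      obtain ⟨N, hN⟩ := ihg
      obtain ⟨M, hM⟩ := ihg'
      exact ⟨N + M, lenW_mul hN hM⟩
  | inv g _ ihg =>
      obtain ⟨N, hN⟩ := ihg
      exact ⟨N, lenW_inv hN⟩


theorem hasSections_conj' {f : Equiv.Perm (Vtx p)} {s : Fin p → Equiv.Perm (Vtx p)}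
    (hf : hasSections f s) (n : ℕ) :
    hasSections ((aAut p ^ n)⁻¹ * f * aAut p ^ n) (fun x => s (x + (n : Fin p))) := by
  intro x τ
  simp only [Equiv.Perm.mul_apply, aAut_pow_cons, hf (x + (n : Fin p)) τ, aAut_pow_inv_cons]
  congr 1
  ring

/-- Every element of `G` admits a level-one decomposition. -/
theorem exists_decomp {g : Equiv.Perm (Vtx p)} (hg : g ∈ D.grp hp1) :
    ∃ (k : ℕ) (s : Fin p → Equiv.Perm (Vtx p)), hasSections (g * (aAut p ^ k)⁻¹) s := by
  induction hg using Subgroup.closure_induction with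
  | mem g hg =>
      rcases Set.mem_insert_iff.mp hg with h | ⟨j, i, h⟩
      · refine ⟨1, fun _ => 1, ?_⟩
        subst h
        have : aAut p * (aAut p ^ 1)⁻¹ = 1 := by group
        rw [this]
        exact hasSections_one
      · subst h
        have heq : D.gen hp1 j i * (aAut p ^ 0)⁻¹ = D.gen hp1 j i := by group
        exact ⟨0, _, by rw [heq]; exact hasSections_gen D hp1 j i⟩
  | one =>
      refine ⟨0, fun _ => 1, ?_⟩
      have : (1 : Equiv.Perm (Vtx p)) * (aAut p ^ 0)⁻¹ = 1 := by group
      rw [this]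
      exact hasSections_one
  | mul g g' _ _ ihg ihg' =>
      obtain ⟨k, s, hs⟩ := ihg
      obtain ⟨k', s', hs'⟩ := ihg'
      refine ⟨k + k', fun x => s x * s' (x - (k : Fin p)), ?_⟩
      have heq : g * g' * (aAut p ^ (k + k'))⁻¹ =
          (g * (aAut p ^ k)⁻¹) * (aAut p ^ k * (g' * (aAut p ^ k')⁻¹) * (aAut p ^ k)⁻¹) := by
        rw [pow_add]
        group
      rw [heq]
      exact hasSections_mul hs (hasSections_conj hs' k)
  | inv g _ ihg =>
      obtain ⟨k, s, hs⟩ := ihg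
      refine ⟨k * (p - 1), fun x => (s (x + (k : Fin p)))⁻¹, ?_⟩
      have hkp : (aAut p ^ (k * (p - 1)))⁻¹ = aAut p ^ k := by
        apply inv_eq_of_mul_eq_one_left
        rw [← pow_add]
        apply aAut_pow_eq_one
        have hp' : p - 1 + 1 = p := by omega
        have : k + k * (p - 1) = k * p := by
          calc k + k * (p - 1) = k * ((p - 1) + 1) := by ring
          _ = k * p := by rw [hp']
        rw [this]
        push_cast [Fin.natCast_self]
        ring
      have heq : g⁻¹ * (aAut p ^ (k * (p - 1)))⁻¹ =
          (aAut p ^ k)⁻¹ * (g * (aAut p ^ k)⁻¹)⁻¹ * aAut p ^ k := by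
        rw [hkp]
        group
      rw [heq]
      exact hasSections_conj' (hasSections_inv hs) k

/-- **Key lemma**: sections of an element of `lenW N` decompose as products of
mixed lists, one factor per syllable, with total directed count at most `N`. -/
theorem sections_lenW {N : ℕ} {g : Equiv.Perm (Vtx p)} (hg : g ∈ lenW D hp1 N)
    {k : ℕ} {s : Fin p → Equiv.Perm (Vtx p)} (hs : hasSections (g * (aAut p ^ k)⁻¹) s) :
    ∃ f : Fin p → ℕ, (∑ x : Fin p, f x) ≤ N ∧ ∀ x : Fin p,
      ∃ L : List (Fin p × Bool × Equiv.Perm (Vtx p)),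
        (∀ e ∈ L, if e.2.1 = true then e.2.2 ∈ D.bFam hp1 e.1
          else e.2.2 ∈ Subgroup.zpowers (aAut p)) ∧
        s x = (L.map (fun e => e.2.2)).prod ∧
        L.countP (fun e => e.2.1) = f x ∧ L.length = N := by
  induction N generalizing g k s with
  | zero =>
      obtain ⟨m, rfl⟩ := mem_zpowers_aAut hg
      obtain ⟨-, hs1⟩ := sections_of_apow hs
      refine ⟨fun _ => 0, by simp, fun x => ⟨[], by simp, by simp [hs1 x], by simp, rfl⟩⟩
  | succ N ih =>
      obtain ⟨c, d, h, hc, ⟨j, hd⟩, hh, rfl⟩ := hg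
      obtain ⟨m, rfl⟩ := mem_zpowers_aAut hc
      obtain ⟨k2, s2, hs2⟩ := exists_decomp (lenW_subset_grp hh)
      obtain ⟨sd, hsd, hsdb, hsda⟩ := bFam_sections D hp1 j d hd
      set mF : Fin p := (m : Fin p) with hmF
      have h1 : hasSections (aAut p ^ m * d * (aAut p ^ m)⁻¹) (fun x => sd (x - mF)) :=
        hasSections_conj hsd m
      have h2 : hasSections (aAut p ^ m * (h * (aAut p ^ k2)⁻¹) * (aAut p ^ m)⁻¹)
          (fun x => s2 (x - mF)) := hasSections_conj hs2 m
      set u1 := aAut p ^ m * d * (aAut p ^ m)⁻¹ with hu1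
      set u2 := aAut p ^ m * (h * (aAut p ^ k2)⁻¹) * (aAut p ^ m)⁻¹ with hu2
      have hw : (u1 * u2)⁻¹ * (aAut p ^ m * d * h * (aAut p ^ k)⁻¹) =
          aAut p ^ (m + k2) * (aAut p ^ k)⁻¹ := by
        rw [hu1, hu2, pow_add]
        group
      have hws : hasSections (aAut p ^ (m + k2) * (aAut p ^ k)⁻¹)
          (fun x => (sd (x - mF) * s2 (x - mF))⁻¹ * s x) := by
        rw [← hw]
        exact hasSections_mul (hasSections_inv (hasSections_mul h1 h2)) hs
      obtain ⟨hone, -⟩ := sections_of_apow hws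
      have hX : u1 * u2 = aAut p ^ m * d * h * (aAut p ^ k)⁻¹ := by
        rw [← inv_mul_eq_one, hw]
        exact hone
      have hsec : ∀ x, s x = sd (x - mF) * s2 (x - mF) := by
        have := hasSections_mul h1 h2
        rw [hX] at this
        exact fun x => (hasSections_unique hs this x)
      obtain ⟨f2, hf2sum, hf2⟩ := ih hh hs2
      refine ⟨fun x => (if x - mF = pathLetter j then 1 else 0) + f2 (x - mF), ?_, ?_⟩
      · have e1 : ∑ x : Fin p, ((if x - mF = pathLetter j then 1 else 0) + f2 (x - mF)) =
            (∑ x : Fin p, (if x - mF = pathLetter j then 1 else 0)) +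
            ∑ x : Fin p, f2 (x - mF) := Finset.sum_add_distrib
        have e2 : ∑ x : Fin p, f2 (x - mF) = ∑ x : Fin p, f2 x :=
          Equiv.sum_comp (Equiv.subRight mF) f2
        have e3 : ∑ x : Fin p, (if x - mF = pathLetter j then (1:ℕ) else 0) = 1 := by
          have : ∀ x : Fin p, (if x - mF = pathLetter j then (1:ℕ) else 0) =
              (if x = pathLetter j + mF then (1:ℕ) else 0) := by
            intro x
            congr 1
            simp [sub_eq_iff_eq_add]
          simp only [this]
          simp
        rw [e1, e2, e3]
        omega
      · intro x
        obtain ⟨L2, hL2mem, hL2prod, hL2count, hL2len⟩ := hf2 (x - mF)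
        refine ⟨(j, decide (x - mF = pathLetter j), sd (x - mF)) :: L2, ?_, ?_, ?_, ?_⟩
        · intro e he
          rcases List.mem_cons.mp he with rfl | he
          · by_cases hxm : x - mF = pathLetter j
            · simpa [hxm] using hsdb
            · simpa [hxm] using hsda _ hxm
          · exact hL2mem e he
        · rw [List.map_cons, List.prod_cons, ← hL2prod]
          exact hsec x
        · rw [List.countP_cons]
          by_cases hxm : x - mF = pathLetter j <;> simp [hxm, hL2count] <;> omega
        · simp [hL2len]


theorem dlen_le_of_lenW {g : Equiv.Perm (Vtx p)} {N : ℕ} (h : g ∈ lenW D hp1 N) :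
    dlen D hp1 g ≤ N :=
  Nat.sInf_le (lenWitness_of_lenW h)

theorem dlen_witness {g : Equiv.Perm (Vtx p)} (hg : g ∈ D.grp hp1) :
    g ∈ lenW D hp1 (dlen D hp1 g) := by
  have hne : {N | lenWitness D hp1 g N}.Nonempty := by
    obtain ⟨N, hN⟩ := exists_lenW_of_mem_grp hg
    exact ⟨N, lenWitness_of_lenW hN⟩
  exact lenW_of_lenWitness (Nat.sInf_mem hne)

/-- Sections of a pure product of directed syllables: the section at `y` has
length at most the number of syllables whose spine letter is `y`. -/
theorem pureList_sections (L : List (Fin p × Equiv.Perm (Vtx p)))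
    (hL : ∀ e ∈ L, e.2 ∈ D.bFam hp1 e.1) :
    ∃ t : Fin p → Equiv.Perm (Vtx p), hasSections ((L.map Prod.snd).prod) t ∧
      ∀ y, t y ∈ lenW D hp1 (L.countP (fun e => decide (pathLetter e.1 = y))) := by
  induction L with
  | nil =>
      refine ⟨fun _ => 1, by simpa using hasSections_one, fun y => by
        simpa using one_mem_lenW⟩
  | cons e L ih =>
      obtain ⟨t', ht', htw⟩ := ih (fun f hf => hL f (List.mem_cons_of_mem e hf))
      obtain ⟨sd, hsd, hsdb, hsda⟩ := bFam_sections D hp1 e.1 e.2 (hL e (by simp))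
      refine ⟨fun y => sd y * t' y, ?_, ?_⟩
      · rw [List.map_cons, List.prod_cons]
        exact hasSections_mul hsd ht'
      · intro y
        rw [List.countP_cons]
        by_cases hy : pathLetter e.1 = y
        · rw [decide_eq_true hy, if_pos rfl]
          subst hy
          exact bfam_mul_lenW hsdb (htw _)
        · have : (decide (pathLetter e.1 = y)) = false := by simpa using hy
          rw [this]
          simp only [Bool.false_eq_true, if_neg, if_false, Nat.add_zero]
          exact apow_mul_lenW (hsda y (fun h => hy h.symm)) (htw y)

theorem chain_count_le (y : Fin p) : ∀ (n : ℕ) (l : List (Fin p)), l.length ≤ n →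
    l.IsChain (· ≠ ·) → l.countP (fun j => decide (j = y)) ≤ (l.length + 1) / 2 := by
  intro n
  induction n with
  | zero =>
      intro l hl _
      rw [List.length_eq_zero_iff.mp (Nat.le_zero.mp hl)]
      simp
  | succ n ih =>
      intro l hl hch
      match l with
      | [] => simp
      | [a] =>
          simp only [List.countP_cons, List.countP_nil, List.length_cons, List.length_nil]
          split <;> omega
      | a :: b :: t =>
          have hab : a ≠ b := (List.isChain_cons_cons.mp hch).1
          have hcht : t.IsChain (· ≠ ·) := ((List.isChain_cons_cons.mp hch).2).tail
          have hlen : t.length ≤ n := by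
            simp only [List.length_cons] at hl
            omega
          have hit := ih t hlen hcht
          simp only [List.countP_cons, List.length_cons]
          by_cases ha : a = y
          · have hb : b ≠ y := fun h => hab (h ▸ ha)
            rw [decide_eq_true ha, decide_eq_false hb, if_pos rfl]
            simp only [Bool.false_eq_true, if_false]
            omega
          · rw [decide_eq_false ha]
            simp only [Bool.false_eq_true, if_false, Nat.add_zero]
            split <;> omega

theorem pathLetter_injective : Function.Injective (pathLetter (p := p)) := by
  intro a b h
  rw [pathLetter, pathLetter] at h
  have := neg_injective h
  exact add_right_cancel this

end Helpers

theorem stmt6 (p : ℕ) (hp : p.Prime) (hodd : Odd p) [NeZero p]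
    (D : SpinalData p) :
    ∀ g ∈ D.grp hp.one_lt, ∀ (k : ℕ) (s : Fin p → Equiv.Perm (Vtx p)),
      (∀ x, s x ∈ D.grp hp.one_lt) →
      hasSections (g * (aAut p ^ k)⁻¹) s →
      (∑ x : Fin p, dlen D hp.one_lt (s x)) ≤ dlen D hp.one_lt g ∧
      (1 < dlen D hp.one_lt g →
        ∀ (x : Fin p) (k' : ℕ) (t : Fin p → Equiv.Perm (Vtx p)),
          (∀ y, t y ∈ D.grp hp.one_lt) →
          hasSections (s x * (aAut p ^ k')⁻¹) t →
          ∀ y, dlen D hp.one_lt (t y) < dlen D hp.one_lt g) := by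
  intro g hg k s hsmem hs
  have hp1 := hp.one_lt
  set N := dlen D hp1 g with hN
  have hgN : g ∈ lenW D hp1 N := dlen_witness hg
  obtain ⟨f, hfsum, hf⟩ := sections_lenW hgN hs
  have hdlen_le : ∀ x, dlen D hp1 (s x) ≤ f x := by
    intro x
    obtain ⟨L, hmem, hprod, hcount, hlen⟩ := hf x
    have h1 : s x ∈ lenW D hp1 (f x) := by
      rw [hprod, ← hcount]
      exact mixedList_mem_lenW L hmem
    exact dlen_le_of_lenW h1
  have hsum : (∑ x : Fin p, dlen D hp1 (s x)) ≤ N := by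
    calc (∑ x : Fin p, dlen D hp1 (s x)) ≤ ∑ x : Fin p, f x :=
        Finset.sum_le_sum (fun x _ => hdlen_le x)
    _ ≤ N := hfsum
  refine ⟨hsum, ?_⟩
  intro hN1 x k' t htmem ht
  set M := dlen D hp1 (s x) with hM
  have hMlefx : M ≤ f x := hdlen_le x
  have hfxN : f x ≤ N := by
    calc f x ≤ ∑ x' : Fin p, f x' :=
        Finset.single_le_sum (fun i _ => Nat.zero_le _) (Finset.mem_univ x)
    _ ≤ N := hfsum
  have hsxM : s x ∈ lenW D hp1 M := dlen_witness (hsmem x)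
  obtain ⟨f2, hf2sum, hf2⟩ := sections_lenW hsxM ht
  have hdlen2_le : ∀ y, dlen D hp1 (t y) ≤ f2 y := by
    intro y
    obtain ⟨L, hmem, hprod, hcount, hlen⟩ := hf2 y
    have h1 : t y ∈ lenW D hp1 (f2 y) := by
      rw [hprod, ← hcount]
      exact mixedList_mem_lenW L hmem
    exact dlen_le_of_lenW h1
  intro y
  by_cases hcase : M < N
  · have : f2 y ≤ M := by
      calc f2 y ≤ ∑ y' : Fin p, f2 y' :=
          Finset.single_le_sum (fun i _ => Nat.zero_le _) (Finset.mem_univ y)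
      _ ≤ M := hf2sum
    have := hdlen2_le y
    omega
  · have hMN : M = N := by omega
    have hfx : f x = N := by omega
    obtain ⟨L, hmem, hprod, hcount, hlen⟩ := hf x
    have hall : ∀ e ∈ L, e.2.1 = true := by
      rw [← List.countP_eq_length]
      omega
    set P : List (Fin p × Equiv.Perm (Vtx p)) := L.map (fun e => (e.1, e.2.2)) with hP
    have hpure : ∀ e ∈ P, e.2 ∈ D.bFam hp1 e.1 := by
      rintro e he
      rw [hP] at he
      obtain ⟨e', he', rfl⟩ := List.mem_map.mp he
      have := hmem e' he'
      rw [if_pos (hall e' he')] at this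
      exact this
    have hPprod : (P.map Prod.snd).prod = (L.map (fun e => e.2.2)).prod := by
      rw [hP, List.map_map]
      rfl
    have hPlen : P.length = N := by rw [hP, List.length_map, hlen]
    by_cases hch : (P.map Prod.fst).IsChain (· ≠ ·)
    · obtain ⟨t0, ht0, ht0w⟩ := pureList_sections P hpure
      have hsxsec : hasSections (s x) t0 := by
        rw [hprod, ← hPprod]
        exact ht0
      have hw : (s x)⁻¹ * (s x * (aAut p ^ k')⁻¹) = aAut p ^ 0 * (aAut p ^ k')⁻¹ := by
        group
      have hws : hasSections (aAut p ^ 0 * (aAut p ^ k')⁻¹) (fun z => (t0 z)⁻¹ * t z) := by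
        rw [← hw]
        exact hasSections_mul (hasSections_inv hsxsec) ht
      obtain ⟨-, htriv⟩ := sections_of_apow hws
      have hty : t y = t0 y := (inv_mul_eq_one.mp (htriv y)).symm
      have hcnt : t0 y ∈ lenW D hp1 (P.countP (fun e => decide (pathLetter e.1 = y))) :=
        ht0w y
      have hchl : ((P.map Prod.fst).map (pathLetter (p := p))).IsChain (· ≠ ·) := by
        rw [List.isChain_map]
        exact hch.imp (fun a b hab h => hab (pathLetter_injective h))
      have hcb : P.countP (fun e => decide (pathLetter e.1 = y)) ≤ (N + 1) / 2 := by
        have h1 : P.countP (fun e => decide (pathLetter e.1 = y)) =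
            ((P.map Prod.fst).map (pathLetter (p := p))).countP (fun z => decide (z = y)) := by
          simp only [List.countP_map]
          rfl
        have h2 := chain_count_le y (((P.map Prod.fst).map (pathLetter (p := p))).length)
          ((P.map Prod.fst).map (pathLetter (p := p))) le_rfl hchl
        rw [h1]
        have h3 : ((P.map Prod.fst).map (pathLetter (p := p))).length = N := by
          rw [List.length_map, List.length_map, hPlen]
        rw [h3] at h2
        exact h2
      have hfin : dlen D hp1 (t y) ≤ (N + 1) / 2 := by
        have := dlen_le_of_lenW hcnt
        rw [← hty] at this
        omega
      omega
    · have hmerge := pureList_merge P hpure hch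
      have : dlen D hp1 (s x) ≤ N - 1 := by
        apply dlen_le_of_lenW
        rw [hprod, ← hPprod]
        rw [hPlen] at hmerge
        exact hmerge
      omega

end GMS
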